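/- Let h(x,y) = A(1 - e^{ax})(1 - e^{by}) with A > 0 and a, b < 0. Then H(x,y) = h_xx + h_yy is not a constant function on ℝ₊². -/

import Mathlib

open Set

/-- Isotropic mean curvature of the Monge surface z = h(x,y). -/
noncomputable def isoMean (h : ℝ → ℝ → ℝ) (x y : ℝ) : ℝ :=
  deriv (deriv (fun x' => h x' y)) x + deriv (deriv (fun y' => h x y')) y

private lemma exp_hd (k t : ℝ) : HasDerivAt (fun s => Real.exp (k * s)) (Real.exp (k * t) * k) t := by
  have h := (Real.hasDerivAt_exp (k * t)).comp t ((hasDerivAt_id t).const_mul k)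
  rw [mul_one] at h
  exact h

private lemma hasD (C k t : ℝ) :
    HasDerivAt (fun s => C * (1 - Real.exp (k * s))) (-(C * k * Real.exp (k * t))) t := by
  have := ((exp_hd k t).const_sub 1).const_mul C
  exact this.congr_deriv (by ring)

private lemma hasD2 (C k t : ℝ) :
    HasDerivAt (fun s => -(C * k * Real.exp (k * s))) (-(C * k * k * Real.exp (k * t))) t := by
  have := ((exp_hd k t).const_mul (C * k)).neg
  exact this.congr_deriv (by ring)

private lemma d2 (C k t : ℝ) :
    deriv (deriv (fun s => C * (1 - Real.exp (k * s)))) t = -(C * k * k * Real.exp (k * t)) := by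
  have h1 : deriv (fun s => C * (1 - Real.exp (k * s))) = fun u => -(C * k * Real.exp (k * u)) :=
    funext fun u => (hasD C k u).deriv
  rw [h1]
  exact (hasD2 C k t).deriv

private lemma isoMean_eq (A a b x y : ℝ) :
    isoMean (fun x y => A * (1 - Real.exp (a * x)) * (1 - Real.exp (b * y))) x y
      = -(A * (1 - Real.exp (b * y)) * a * a * Real.exp (a * x))
        - A * (1 - Real.exp (a * x)) * b * b * Real.exp (b * y) := by
  unfold isoMean
  have e1 : (fun x' => A * (1 - Real.exp (a * x')) * (1 - Real.exp (b * y)))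
      = fun x' => (A * (1 - Real.exp (b * y))) * (1 - Real.exp (a * x')) := by
    funext s; ring
  have e2 : (fun y' => A * (1 - Real.exp (a * x)) * (1 - Real.exp (b * y')))
      = fun y' => (A * (1 - Real.exp (a * x))) * (1 - Real.exp (b * y')) := by
    funext s; ring
  rw [e1, e2, d2, d2]
  ring

/-- the isotropic mean curvature of the Spillman–Mitscherlich
surface z = A(1-e^{ax})(1-e^{by}) is not constant on ℝ₊². -/
theorem stmt17 (A a b : ℝ) (hA : 0 < A) (ha : a < 0) (hb : b < 0) :
    ¬ ∃ c : ℝ, ∀ x y : ℝ, 0 < x → 0 < y →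
      isoMean (fun x y => A * (1 - Real.exp (a * x)) * (1 - Real.exp (b * y))) x y = c := by
  rintro ⟨c, hc⟩
  have h11 := hc 1 1 one_pos one_pos
  have h21 := hc 2 1 two_pos one_pos
  have h12 := hc 1 2 one_pos two_pos
  have h22 := hc 2 2 two_pos two_pos
  rw [isoMean_eq] at h11 h21 h12 h22
  set u1 := Real.exp (a * 1) with hu1
  set u2 := Real.exp (a * 2) with hu2
  set v1 := Real.exp (b * 1) with hv1
  set v2 := Real.exp (b * 2) with hv2
  have hu : u2 < u1 := Real.exp_lt_exp.mpr (by nlinarith)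
  have hv : v2 < v1 := Real.exp_lt_exp.mpr (by nlinarith)
  -- subtract equations
  have e1 : A * (u1 - u2) * (b * b * v1 - a * a * (1 - v1)) = 0 := by nlinarith [h11, h21]
  have e2 : A * (u1 - u2) * (b * b * v2 - a * a * (1 - v2)) = 0 := by nlinarith [h12, h22]
  have hpos : 0 < A * (u1 - u2) := mul_pos hA (sub_pos.mpr hu)
  have b1 : b * b * v1 - a * a * (1 - v1) = 0 := by
    rcases mul_eq_zero.mp e1 with h | h
    · exact absurd h (ne_of_gt hpos)
    · exact h
  have b2 : b * b * v2 - a * a * (1 - v2) = 0 := by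
    rcases mul_eq_zero.mp e2 with h | h
    · exact absurd h (ne_of_gt hpos)
    · exact h
  have hab : (a * a + b * b) * (v1 - v2) = 0 := by nlinarith [b1, b2]
  have : 0 < a * a + b * b := by nlinarith
  nlinarith [hab, hv, this]
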